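/- Let η ∈ F_9 satisfy η^4 = -1. The set {(1, t, t^2 + η t^6, t^3, t^4) : t ∈ F_9} ∪ {(0,0,0,0,1)} is an arc of size 10 in PG(4, 9), i.e., any 5 of these points are linearly independent over F_9. -/

import Mathlib

open Matrix

section GlynnAux

variable {F : Type*} [Field F]

private lemma glynn_split5 (t : Fin 5 → F) (a b : F) :
    ((vandermonde t).updateCol 2 (fun i => a * t i ^ 2 + b * t i ^ 6)).det
      = a * (vandermonde t).det
        + b * ((vandermonde t).updateCol 2 (fun i => t i ^ 6)).det := by
  have h1 : (fun i => a * t i ^ 2 + b * t i ^ 6)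
      = (a • fun i : Fin 5 => t i ^ 2) + (b • fun i => t i ^ 6) := rfl
  have h2 : (vandermonde t).updateCol 2 (fun i => t i ^ 2) = vandermonde t := by
    have h3 : (fun i => t i ^ 2) = (fun i => (vandermonde t) i 2) := rfl
    rw [h3, Matrix.updateCol_eq_self]
  rw [h1, Matrix.det_updateCol_add, Matrix.det_updateCol_smul,
    Matrix.det_updateCol_smul, h2]

private lemma glynn_split4 (t : Fin 4 → F) (a b : F) :
    ((vandermonde t).updateCol 2 (fun i => a * t i ^ 2 + b * t i ^ 6)).det
      = a * (vandermonde t).det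
        + b * ((vandermonde t).updateCol 2 (fun i => t i ^ 6)).det := by
  have h1 : (fun i => a * t i ^ 2 + b * t i ^ 6)
      = (a • fun i : Fin 4 => t i ^ 2) + (b • fun i => t i ^ 6) := rfl
  have h2 : (vandermonde t).updateCol 2 (fun i => t i ^ 2) = vandermonde t := by
    have h3 : (fun i => t i ^ 2) = (fun i => (vandermonde t) i 2) := rfl
    rw [h3, Matrix.updateCol_eq_self]
  rw [h1, Matrix.det_updateCol_add, Matrix.det_updateCol_smul,
    Matrix.det_updateCol_smul, h2]

variable [Fintype F] [CharP F 3] [Fact (Nat.Prime 3)]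

private lemma glynn_frob5 (hF : Fintype.card F = 9) (t : Fin 5 → F) (c : F) :
    (((vandermonde t).updateCol 2 (fun i => 1 * t i ^ 2 + c * t i ^ 6)).map
        (frobenius F 3)).submatrix id (Equiv.swap 1 3)
      = (vandermonde t).updateCol 2 (fun i => c ^ 3 * t i ^ 2 + 1 * t i ^ 6) := by
  have h9 : ∀ x : F, x ^ 9 = x := fun x => by rw [← hF]; exact FiniteField.pow_card x
  have p1 : ∀ x : F, (x ^ 3) ^ 3 = x := fun x => by
    rw [← pow_mul]; norm_num; exact h9 x
  have p4 : ∀ x : F, (x ^ 4) ^ 3 = x ^ 4 := fun x => by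
    have h12 : x ^ 12 = x ^ 9 * x ^ 3 := by ring
    rw [← pow_mul]; norm_num [h12, h9 x]; ring
  have p2 : ∀ x : F, (x ^ 2 + c * x ^ 6) ^ 3 = c ^ 3 * x ^ 2 + x ^ 6 := by
    intro x
    have h18 : x ^ 18 = x ^ 2 := by
      have h : x ^ 18 = (x ^ 9) ^ 2 := by ring
      rw [h, h9]
    have h := add_pow_char (p := 3) (x ^ 2) (c * x ^ 6)
    rw [h, mul_pow]
    linear_combination c ^ 3 * h18
  ext i j
  fin_cases j <;>
    simp [Matrix.submatrix_apply, Matrix.updateCol_apply, Matrix.map_apply,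
      frobenius_def, vandermonde, Equiv.swap_apply_def, p1, p4, p2, one_pow,
      show ((1 : Fin 5) : ℕ) = 1 from rfl, show ((2 : Fin 5) : ℕ) = 2 from rfl,
      show ((3 : Fin 5) : ℕ) = 3 from rfl, show ((4 : Fin 5) : ℕ) = 4 from rfl]

private lemma glynn_frob4 (hF : Fintype.card F = 9) (t : Fin 4 → F) (c : F) :
    (((vandermonde t).updateCol 2 (fun i => 1 * t i ^ 2 + c * t i ^ 6)).map
        (frobenius F 3)).submatrix id (Equiv.swap 1 3)
      = (vandermonde t).updateCol 2 (fun i => c ^ 3 * t i ^ 2 + 1 * t i ^ 6) := by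
  have h9 : ∀ x : F, x ^ 9 = x := fun x => by rw [← hF]; exact FiniteField.pow_card x
  have p1 : ∀ x : F, (x ^ 3) ^ 3 = x := fun x => by
    rw [← pow_mul]; norm_num; exact h9 x
  have p2 : ∀ x : F, (x ^ 2 + c * x ^ 6) ^ 3 = c ^ 3 * x ^ 2 + x ^ 6 := by
    intro x
    have h18 : x ^ 18 = x ^ 2 := by
      have h : x ^ 18 = (x ^ 9) ^ 2 := by ring
      rw [h, h9]
    have h := add_pow_char (p := 3) (x ^ 2) (c * x ^ 6)
    rw [h, mul_pow]
    linear_combination c ^ 3 * h18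
  ext i j
  fin_cases j <;>
    simp [Matrix.submatrix_apply, Matrix.updateCol_apply, Matrix.map_apply,
      frobenius_def, vandermonde, Equiv.swap_apply_def, p1, p2, one_pow,
      show ((1 : Fin 4) : ℕ) = 1 from rfl, show ((2 : Fin 4) : ℕ) = 2 from rfl,
      show ((3 : Fin 4) : ℕ) = 3 from rfl]

private lemma glynn_det5 (hF : Fintype.card F = 9) {η : F} (hη : η ^ 4 = -1)
    (t : Fin 5 → F) (ht : Function.Injective t) :
    ((vandermonde t).updateCol 2 (fun i => 1 * t i ^ 2 + η * t i ^ 6)).det ≠ 0 := by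
  have hA : (vandermonde t).det ≠ 0 := Matrix.det_vandermonde_ne_zero_iff.mpr ht
  intro h0
  have e1 : (0 : F) = 1 * (vandermonde t).det
      + η * ((vandermonde t).updateCol 2 (fun i => t i ^ 6)).det := by
    rw [← h0]; exact glynn_split5 t 1 η
  have e2 : ((vandermonde t).updateCol 2 (fun i => η ^ 3 * t i ^ 2 + 1 * t i ^ 6)).det
      = 0 := by
    rw [← glynn_frob5 hF t η, Matrix.det_permute', ← RingHom.mapMatrix_apply,
      ← RingHom.map_det, frobenius_def, h0]
    simp
  rw [glynn_split5] at e2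
  have h2 : (2 : F) ≠ 0 := by
    have h3 : (3 : F) = 0 := by exact_mod_cast CharP.cast_eq_zero F 3
    intro h
    exact one_ne_zero (α := F) (by linear_combination h3 - h)
  have hA2 : (vandermonde t).det * 2 = 0 := by
    linear_combination -e1 - η * e2 + (vandermonde t).det * hη
  exact hA ((mul_eq_zero.mp hA2).resolve_right h2)

private lemma glynn_det4 (hF : Fintype.card F = 9) {η : F} (hη : η ^ 4 = -1)
    (t : Fin 4 → F) (ht : Function.Injective t) :
    ((vandermonde t).updateCol 2 (fun i => 1 * t i ^ 2 + η * t i ^ 6)).det ≠ 0 := by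
  have hA : (vandermonde t).det ≠ 0 := Matrix.det_vandermonde_ne_zero_iff.mpr ht
  intro h0
  have e1 : (0 : F) = 1 * (vandermonde t).det
      + η * ((vandermonde t).updateCol 2 (fun i => t i ^ 6)).det := by
    rw [← h0]; exact glynn_split4 t 1 η
  have e2 : ((vandermonde t).updateCol 2 (fun i => η ^ 3 * t i ^ 2 + 1 * t i ^ 6)).det
      = 0 := by
    rw [← glynn_frob4 hF t η, Matrix.det_permute', ← RingHom.mapMatrix_apply,
      ← RingHom.map_det, frobenius_def, h0]
    simp
  rw [glynn_split4] at e2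
  have h2 : (2 : F) ≠ 0 := by
    have h3 : (3 : F) = 0 := by exact_mod_cast CharP.cast_eq_zero F 3
    intro h
    exact one_ne_zero (α := F) (by linear_combination h3 - h)
  have hA2 : (vandermonde t).det * 2 = 0 := by
    linear_combination -e1 - η * e2 + (vandermonde t).det * hη
  exact hA ((mul_eq_zero.mp hA2).resolve_right h2)

private lemma glynn_li5 (hF : Fintype.card F = 9) {η : F} (hη : η ^ 4 = -1)
    (t : Fin 5 → F) (ht : Function.Injective t) :
    LinearIndependent F (fun i => ![1, t i, t i ^ 2 + η * t i ^ 6, t i ^ 3, t i ^ 4]) := by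
  have hrow : (fun i => ![(1 : F), t i, t i ^ 2 + η * t i ^ 6, t i ^ 3, t i ^ 4])
      = fun i => ((vandermonde t).updateCol 2
          (fun i => 1 * t i ^ 2 + η * t i ^ 6)) i := by
    funext i
    ext j
    fin_cases j <;>
      simp [Matrix.updateCol_apply, vandermonde,
        show ((1 : Fin 5) : ℕ) = 1 from rfl, show ((3 : Fin 5) : ℕ) = 3 from rfl,
        show ((4 : Fin 5) : ℕ) = 4 from rfl]
  rw [hrow]
  refine (Matrix.linearIndependent_rows_iff_isUnit (A := (vandermonde t).updateCol 2
    (fun i => 1 * t i ^ 2 + η * t i ^ 6))).mpr ?_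
  rw [Matrix.isUnit_iff_isUnit_det, isUnit_iff_ne_zero]
  exact glynn_det5 hF hη t ht

private lemma glynn_li4 (hF : Fintype.card F = 9) {η : F} (hη : η ^ 4 = -1)
    (t : Fin 4 → F) (ht : Function.Injective t) :
    LinearIndependent F
      (Fin.snoc (fun i => ![1, t i, t i ^ 2 + η * t i ^ 6, t i ^ 3, t i ^ 4])
        ![0, 0, 0, 0, 1] : Fin 5 → Fin 5 → F) := by
  set M : Matrix (Fin 5) (Fin 5) F :=
    Matrix.of (Fin.snoc (fun i => ![1, t i, t i ^ 2 + η * t i ^ 6, t i ^ 3, t i ^ 4])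
      ![0, 0, 0, 0, 1]) with hM
  show LinearIndependent F (fun i => M i)
  refine (Matrix.linearIndependent_rows_iff_isUnit (A := M)).mpr ?_
  rw [Matrix.isUnit_iff_isUnit_det,
    isUnit_iff_ne_zero]
  have hminor : M.submatrix Fin.castSucc Fin.castSucc
      = (vandermonde t).updateCol 2 (fun i => 1 * t i ^ 2 + η * t i ^ 6) := by
    ext i j
    fin_cases j <;>
      simp [hM, Matrix.submatrix_apply, Matrix.updateCol_apply, vandermonde,
        show ((1 : Fin 4) : ℕ) = 1 from rfl, show ((3 : Fin 4) : ℕ) = 3 from rfl,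
        show Fin.castSucc (0 : Fin 4) = (0 : Fin 5) from rfl,
        show Fin.castSucc (1 : Fin 4) = (1 : Fin 5) from rfl,
        show Fin.castSucc (2 : Fin 4) = (2 : Fin 5) from rfl,
        show Fin.castSucc (3 : Fin 4) = (3 : Fin 5) from rfl]
  have hdet : M.det
      = ((vandermonde t).updateCol 2 (fun i => 1 * t i ^ 2 + η * t i ^ 6)).det := by
    have hrow : M (Fin.last 4) = ![0, 0, 0, 0, 1] := by
      funext j
      simp [hM, Fin.snoc]
    rw [Matrix.det_succ_row M (Fin.last 4), Fin.sum_univ_five, hrow,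
      show Fin.succAbove (4 : Fin 5) = Fin.castSucc from Fin.succAbove_last]
    norm_num [hminor, show ((0 : Fin 5) : ℕ) = 0 from rfl,
      show ((1 : Fin 5) : ℕ) = 1 from rfl, show ((2 : Fin 5) : ℕ) = 2 from rfl,
      show ((3 : Fin 5) : ℕ) = 3 from rfl, show ((4 : Fin 5) : ℕ) = 4 from rfl,
      show (4 : Fin 5) = Fin.last 4 from rfl,
      show (![0, 0, 0, 0, 1] : Fin 5 → F) 2 = 0 from rfl,
      show (![0, 0, 0, 0, 1] : Fin 5 → F) 3 = 0 from rfl,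
      show (![0, 0, 0, 0, 1] : Fin 5 → F) 4 = 1 from rfl]
  rw [hdet]
  exact glynn_det4 hF hη t ht

private lemma glynn_main (hF : Fintype.card F = 9) {η : F} (hη : η ^ 4 = -1)
    (w : Fin 5 → Fin 5 → F)
    (hw : ∀ i, (∃ s : F, w i = ![1, s, s ^ 2 + η * s ^ 6, s ^ 3, s ^ 4])
      ∨ w i = ![0, 0, 0, 0, 1])
    (hinj : Function.Injective w) : LinearIndependent F w := by
  by_cases hex : ∃ k, w k = ![0, 0, 0, 0, 1]
  · obtain ⟨k, hk⟩ := hex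
    rw [← linearIndependent_equiv (Equiv.swap k 4) (f := w)]
    have huinj : Function.Injective (w ∘ (Equiv.swap k 4)) :=
      hinj.comp (Equiv.injective _)
    have hu4 : (w ∘ (Equiv.swap k 4)) (Fin.last 4) = ![0, 0, 0, 0, 1] := by
      have : Equiv.swap k 4 (Fin.last 4) = k := by
        rw [show Fin.last 4 = (4 : Fin 5) from rfl, Equiv.swap_apply_right]
      simp only [Function.comp_apply, this, hk]
    have hut : ∀ i : Fin 4, ∃ s : F, (w ∘ (Equiv.swap k 4)) (Fin.castSucc i)
        = ![1, s, s ^ 2 + η * s ^ 6, s ^ 3, s ^ 4] := by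
      intro i
      rcases hw (Equiv.swap k 4 (Fin.castSucc i)) with ⟨s, hs⟩ | h
      · exact ⟨s, hs⟩
      · exfalso
        have h1 : Equiv.swap k 4 (Fin.castSucc i) = k := hinj (h.trans hk.symm)
        have h2 := congrArg (Equiv.swap k 4) h1
        rw [Equiv.swap_apply_self, Equiv.swap_apply_left] at h2
        have := congrArg Fin.val h2
        simp at this
        omega
    choose t ht using hut
    have htinj : Function.Injective t := by
      intro i j hij
      have h1 : (w ∘ (Equiv.swap k 4)) (Fin.castSucc i)
          = (w ∘ (Equiv.swap k 4)) (Fin.castSucc j) := by rw [ht i, ht j, hij]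
      exact Fin.castSucc_injective 4 (huinj h1)
    have hu : w ∘ (Equiv.swap k 4)
        = Fin.snoc (fun i => ![1, t i, t i ^ 2 + η * t i ^ 6, t i ^ 3, t i ^ 4])
            ![0, 0, 0, 0, 1] := by
      funext i
      refine Fin.lastCases ?_ ?_ i
      · rw [Fin.snoc_last]; exact hu4
      · intro j; rw [Fin.snoc_castSucc]; exact ht j
    rw [hu]
    exact glynn_li4 hF hη t htinj
  · have hut : ∀ i, ∃ s : F, w i = ![1, s, s ^ 2 + η * s ^ 6, s ^ 3, s ^ 4] :=
      fun i => (hw i).resolve_right (fun h => hex ⟨i, h⟩)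
    choose t ht using hut
    have htinj : Function.Injective t := by
      intro i j hij
      exact hinj (by rw [ht i, ht j, hij])
    have hw' : w = fun i => ![1, t i, t i ^ 2 + η * t i ^ 6, t i ^ 3, t i ^ 4] :=
      funext ht
    rw [hw']
    exact glynn_li5 hF hη t htinj

end GlynnAux

/-- Glynn's arc: for `η ∈ F₉` with `η⁴ = -1`, the set
`{(1, t, t² + η t⁶, t³, t⁴) : t ∈ F₉} ∪ {(0,0,0,0,1)}` is an arc of size 10 in
`PG(4, 9)`: any five of its points are linearly independent. -/
theorem glynn_arc {F : Type*} [Field F] [Fintype F] (hF : Fintype.card F = 9)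
    (η : F) (hη : η ^ 4 = -1)
    (S : Set (Fin 5 → F))
    (hS : S = {v | ∃ t : F, v = ![1, t, t ^ 2 + η * t ^ 6, t ^ 3, t ^ 4]}
            ∪ {![0, 0, 0, 0, 1]}) :
    S.ncard = 10 ∧
      ∀ v₁ ∈ S, ∀ v₂ ∈ S, ∀ v₃ ∈ S, ∀ v₄ ∈ S, ∀ v₅ ∈ S,
        v₁ ≠ v₂ → v₁ ≠ v₃ → v₁ ≠ v₄ → v₁ ≠ v₅ →
        v₂ ≠ v₃ → v₂ ≠ v₄ → v₂ ≠ v₅ → v₃ ≠ v₄ → v₃ ≠ v₅ → v₄ ≠ v₅ →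
        LinearIndependent F ![v₁, v₂, v₃, v₄, v₅] := by
  haveI hp3 : Fact (Nat.Prime 3) := ⟨by norm_num⟩
  haveI : CharP F (ringChar F) := ringChar.charP F
  obtain ⟨n, hprime, hcard⟩ := FiniteField.card F (ringChar F)
  rw [hF] at hcard
  have hchar3 : ringChar F = 3 := by
    have hdvd : ringChar F ∣ 9 := hcard ▸ dvd_pow_self _ n.pos.ne'
    have h3 : ringChar F ∣ 3 := hprime.dvd_of_dvd_pow (n := 2) (by norm_num [hdvd])
    exact (Nat.prime_dvd_prime_iff_eq hprime (by norm_num)).mp h3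
  haveI : CharP F 3 := hchar3 ▸ ringChar.charP F
  set f : F → (Fin 5 → F) := fun s => ![1, s, s ^ 2 + η * s ^ 6, s ^ 3, s ^ 4] with hf
  have hfinj : Function.Injective f := by
    intro a b hab
    have := congrFun hab 1
    simpa [hf] using this
  have hfne : ∀ s : F, f s ≠ ![0, 0, 0, 0, 1] := by
    intro s h
    have := congrFun h 0
    simp [hf] at this
  constructor
  · rw [hS]
    have h1 : {v | ∃ t : F, v = ![1, t, t ^ 2 + η * t ^ 6, t ^ 3, t ^ 4]}
        = Set.range f := by
      ext v; simp [hf, Set.range, eq_comm]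
    have h2 : (Set.range f).ncard = 9 := by
      rw [← Nat.card_coe_set_eq, Nat.card_range_of_injective hfinj,
        Nat.card_eq_fintype_card, hF]
    rw [h1, Set.union_singleton,
      Set.ncard_insert_of_notMem (by rintro ⟨s, hs⟩; exact hfne s hs)
        (Set.finite_range f), h2]
  · intro v₁ hv₁ v₂ hv₂ v₃ hv₃ v₄ hv₄ v₅ hv₅ h12 h13 h14 h15 h23 h24 h25 h34 h35 h45
    rw [hS] at hv₁ hv₂ hv₃ hv₄ hv₅
    simp only [Set.mem_union, Set.mem_setOf_eq, Set.mem_singleton_iff] at hv₁ hv₂ hv₃ hv₄ hv₅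
    have hinj : Function.Injective ![v₁, v₂, v₃, v₄, v₅] := by
      clear hv₁ hv₂ hv₃ hv₄ hv₅ hS hcard hfinj hfne hf hprime hchar3 hη hF
      intro i j hij
      fin_cases i <;> fin_cases j <;> simp_all
    have hmem : ∀ i, (∃ s : F, (![v₁, v₂, v₃, v₄, v₅] : Fin 5 → Fin 5 → F) i
        = ![1, s, s ^ 2 + η * s ^ 6, s ^ 3, s ^ 4])
        ∨ (![v₁, v₂, v₃, v₄, v₅] : Fin 5 → Fin 5 → F) i = ![0, 0, 0, 0, 1] := by
      intro i
      fin_cases i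
      exacts [hv₁, hv₂, hv₃, hv₄, hv₅]
    exact glynn_main hF hη ![v₁, v₂, v₃, v₄, v₅] hmem hinj
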